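/- Let P be a partial order and equip P with the Alexandrov topology whose open sets are the upper sets of P. Then P (as a topological space) is sober if and only if every nonempty subset of P has a maximal element (P is co-well-founded). -/
import Mathlib


/-- The Alexandrov topology on a preorder, whose open sets are the upper sets. -/
def alexandrovUpper (P : Type*) [Preorder P] : TopologicalSpace P where
  IsOpen s := IsUpperSet s
  isOpen_univ := isUpperSet_univ
  isOpen_inter _ _ hs ht := hs.inter ht
  isOpen_sUnion _ h := isUpperSet_sUnion h

section Aux

variable {P : Type*} [PartialOrder P]

lemma alexandrovUpper_isOpen_iff {s : Set P} :
    @IsOpen P (alexandrovUpper P) s ↔ IsUpperSet s := Iff.rfl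

lemma alexandrovUpper_isClosed_iff {s : Set P} :
    @IsClosed P (alexandrovUpper P) s ↔ IsLowerSet s := by
  letI := alexandrovUpper P
  rw [← isOpen_compl_iff, alexandrovUpper_isOpen_iff, isUpperSet_compl]

lemma alexandrovUpper_closure_singleton (x : P) :
    @closure P (alexandrovUpper P) {x} = Set.Iic x := by
  letI := alexandrovUpper P
  apply Set.Subset.antisymm
  · exact closure_minimal (by simp) (alexandrovUpper_isClosed_iff.2 (isLowerSet_Iic x))
  · intro y hy
    have hcl : IsLowerSet (closure ({x} : Set P)) :=
      alexandrovUpper_isClosed_iff.1 isClosed_closure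
    exact hcl hy (subset_closure rfl)

end Aux

/-- A poset with the Alexandrov (upper set) topology is sober iff every nonempty subset
has a maximal element. -/
theorem alexandrov_sober_iff_coWellFounded (P : Type*) [PartialOrder P] :
    (letI := alexandrovUpper P; (QuasiSober P ∧ T0Space P)) ↔
      ∀ S : Set P, S.Nonempty → ∃ m ∈ S, ∀ x ∈ S, m ≤ x → x = m := by
  letI := alexandrovUpper P
  constructor
  · rintro ⟨hq, _⟩ S hS
    by_contra h
    push_neg at h
    -- build a strictly increasing sequence in S
    have hstep : ∀ a : S, ∃ b : S, (a : P) < b := by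
      rintro ⟨a, ha⟩
      obtain ⟨x, hx, hle, hne⟩ := h a ha
      exact ⟨⟨x, hx⟩, lt_of_le_of_ne hle (Ne.symm hne)⟩
    choose g hg using hstep
    obtain ⟨s0, hs0⟩ := hS
    set f : ℕ → S := fun n => g^[n] ⟨s0, hs0⟩ with hf
    have hmono : StrictMono f := strictMono_nat_of_lt_succ (by
      intro n
      have : f (n + 1) = g (f n) := by
        simp [hf, Function.iterate_succ_apply']
      rw [this]; exact hg (f n))
    set C : Set P := ⋃ n, Set.Iic (f n : P) with hC
    have hCirr : IsIrreducible C := by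
      constructor
      · exact ⟨(f 0 : P), Set.mem_iUnion.2 ⟨0, le_rfl⟩⟩
      · intro u v hu hv ⟨a, haC, hau⟩ ⟨b, hbC, hbv⟩
        obtain ⟨m, ham⟩ := Set.mem_iUnion.1 haC
        obtain ⟨n, hbn⟩ := Set.mem_iUnion.1 hbC
        refine ⟨(f (max m n) : P), Set.mem_iUnion.2 ⟨max m n, le_rfl⟩, ?_, ?_⟩
        · exact (alexandrovUpper_isOpen_iff.1 hu)
            (ham.trans (hmono.monotone (le_max_left m n))) hau
        · exact (alexandrovUpper_isOpen_iff.1 hv)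
            (hbn.trans (hmono.monotone (le_max_right m n))) hbv
    have hCcl : IsClosed C :=
      alexandrovUpper_isClosed_iff.2 (isLowerSet_iUnion fun n => isLowerSet_Iic _)
    obtain ⟨x, hx⟩ := hq.sober hCirr hCcl
    rw [IsGenericPoint, alexandrovUpper_closure_singleton] at hx
    have hxC : x ∈ C := hx ▸ (le_rfl : x ∈ Set.Iic x)
    obtain ⟨n, hn⟩ := Set.mem_iUnion.1 hxC
    have h1 : (f (n + 1) : P) ∈ Set.Iic x := by
      rw [hx]; exact Set.mem_iUnion.2 ⟨n + 1, le_rfl⟩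
    exact (hmono (Nat.lt_succ_self n)).not_ge (Subtype.coe_le_coe.1 (h1.trans hn))
  · intro H
    constructor
    · constructor
      intro S hSirr hScl
      obtain ⟨m, hmS, hmax⟩ := H S hSirr.nonempty
      refine ⟨m, ?_⟩
      rw [IsGenericPoint, alexandrovUpper_closure_singleton]
      apply Set.Subset.antisymm
      · exact fun y hy => (alexandrovUpper_isClosed_iff.1 hScl) hy hmS
      · intro x hxS
        obtain ⟨c, hcS, hcx, hcm⟩ := hSirr.2 (Set.Ici x) (Set.Ici m)
          (alexandrovUpper_isOpen_iff.2 (isUpperSet_Ici x))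
          (alexandrovUpper_isOpen_iff.2 (isUpperSet_Ici m))
          ⟨x, hxS, le_rfl⟩ ⟨m, hmS, le_rfl⟩
        have : c = m := hmax c hcS hcm
        exact this ▸ hcx
    · constructor
      intro x y hxy
      have h1 : x ∈ closure ({y} : Set P) :=
        (hxy.mem_closed_iff isClosed_closure).2 (subset_closure rfl)
      have h2 : y ∈ closure ({x} : Set P) :=
        (hxy.symm.mem_closed_iff isClosed_closure).2 (subset_closure rfl)
      rw [alexandrovUpper_closure_singleton] at h1 h2
      exact le_antisymm h1 h2
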